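/- Let α, β, L ∈ ℝ with α > 0, β > 0, L > 0, and let ω ∈ ℝ be arbitrary. Then every solution of the planar system ẋ = β·sin θ, θ̇ = ω − L·x − L·α·sin θ converges to an equilibrium: if differentiable x, θ : [0, ∞) → ℝ satisfy the system for all t ≥ 0, then there exists k ∈ ℤ such that x(t) → ω/L and θ(t) → kπ as t → ∞. In particular, the system is globally asymptotically stable for every frequency deviation ω, i.e. the pull-in range of this PLL is infinite. -/

import Mathlib

open Filter Set Real intervalIntegral

-- FTC helper: integrate a right-derivative over [a,b] within Ici 0
lemma ftc_ici {f f' : ℝ → ℝ} (hf : ∀ s ∈ Set.Ici (0:ℝ), HasDerivWithinAt f (f' s) (Set.Ici 0) s)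
    (hf' : ContinuousOn f' (Set.Ici 0)) {a b : ℝ} (ha : 0 ≤ a) (hab : a ≤ b) :
    ∫ s in a..b, f' s = f b - f a := by
  have hsub : Set.Icc a b ⊆ Set.Ici (0:ℝ) := fun s hs => le_trans ha hs.1
  apply integral_eq_sub_of_hasDeriv_right_of_le hab
  · exact fun s hs => ((hf s (hsub hs)).continuousWithinAt).mono hsub
  · intro s hs
    have h0 : (0:ℝ) < s := lt_of_le_of_lt ha hs.1
    exact (((hf s h0.le).hasDerivAt (Ici_mem_nhds h0)).hasDerivWithinAt)
  · exact (hf'.mono hsub).intervalIntegrable_of_Icc hab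

-- escape lemma: if the derivative is ≤ -d from time T on, θ decreases linearly
lemma escape {θ f : ℝ → ℝ} {d T : ℝ} (hT : 0 ≤ T)
    (hθ : ∀ s ∈ Set.Ici (0:ℝ), HasDerivWithinAt θ (f s) (Set.Ici 0) s)
    (hf : ContinuousOn f (Set.Ici 0))
    (hub : ∀ s, T ≤ s → f s ≤ -d) :
    ∀ t, T ≤ t → θ t ≤ θ T - d * (t - T) := by
  intro t ht
  have h1 : ∫ s in T..t, f s = θ t - θ T := ftc_ici hθ hf hT ht
  have hsub : Set.Icc T t ⊆ Set.Ici (0:ℝ) := fun s hs => le_trans hT hs.1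
  have h2 : ∫ s in T..t, f s ≤ ∫ s in T..t, (-d) := by
    apply integral_mono_on ht ((hf.mono hsub).intervalIntegrable_of_Icc ht)
      (_root_.intervalIntegrable_const)
    exact fun s hs => hub s hs.1
  rw [intervalIntegral.integral_const] at h2
  simp only [smul_eq_mul] at h2
  rw [h1] at h2; nlinarith

-- Barbalat-type lemma
lemma barbalat {g : ℝ → ℝ} {M K : ℝ} (hM : 0 < M)
    (hcont : ContinuousOn g (Set.Ici 0))
    (hnn : ∀ t ∈ Set.Ici (0:ℝ), 0 ≤ g t)
    (hlip : ∀ s ∈ Set.Ici (0:ℝ), ∀ t ∈ Set.Ici (0:ℝ), |g s - g t| ≤ M * |s - t|)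
    (hK : ∀ t ∈ Set.Ici (0:ℝ), (∫ s in (0:ℝ)..t, g s) ≤ K) :
    Tendsto g atTop (nhds 0) := by
  have hint : ∀ a b : ℝ, 0 ≤ a → a ≤ b → IntervalIntegrable g MeasureTheory.volume a b := by
    intro a b ha hab
    exact ((hcont.mono (fun s hs => le_trans ha hs.1)).intervalIntegrable_of_Icc hab)
  set G : ℝ → ℝ := fun t => ∫ s in (0:ℝ)..t, g s with hG
  have hGadd : ∀ a b : ℝ, 0 ≤ a → a ≤ b → G b = G a + ∫ s in a..b, g s := by
    intro a b ha hab
    rw [hG]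
    exact (integral_add_adjacent_intervals (hint 0 a le_rfl ha) (hint a b ha hab)).symm
  have hne : (G '' Set.Ici 0).Nonempty := ⟨G 0, ⟨0, Set.self_mem_Ici, rfl⟩⟩
  have hbdd : BddAbove (G '' Set.Ici 0) := ⟨K, fun y ⟨t, ht, hyt⟩ => hyt ▸ hK t ht⟩
  set I := sSup (G '' Set.Ici 0) with hI
  rw [Metric.tendsto_atTop]
  by_contra h
  push_neg at h
  obtain ⟨ε, hε, hfar⟩ := h
  set δ : ℝ := ε / (2 * M) with hδ
  have hδpos : 0 < δ := by positivity
  have hε' : (0:ℝ) < δ * ε / 2 := by positivity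
  obtain ⟨y, ⟨N, hN0, rfl⟩, hNlt⟩ := exists_lt_of_lt_csSup hne (by linarith : I - δ * ε / 2 < I)
  obtain ⟨t₀, ht₀N, ht₀far⟩ := hfar N
  have ht₀0 : (0:ℝ) ≤ t₀ := le_trans hN0 ht₀N
  have hgt₀ : ε ≤ g t₀ := by
    have := ht₀far
    rwa [Real.dist_eq, sub_zero, abs_of_nonneg (hnn t₀ ht₀0)] at this
  have hlow : ∀ s ∈ Set.Icc t₀ (t₀ + δ), ε / 2 ≤ g s := by
    intro s hs
    have hs0 : (0:ℝ) ≤ s := le_trans ht₀0 hs.1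
    have h1 : |g t₀ - g s| ≤ M * |t₀ - s| := hlip t₀ ht₀0 s hs0
    have h2 : |t₀ - s| ≤ δ := by
      rw [abs_sub_comm, abs_of_nonneg (by linarith [hs.1])]
      linarith [hs.2]
    have h3 : g t₀ - g s ≤ M * δ := le_trans (le_trans (le_abs_self _) h1)
      (by nlinarith)
    have hMδ : M * δ = ε / 2 := by rw [hδ]; field_simp
    linarith
  have hIlow : δ * ε / 2 ≤ ∫ s in t₀..(t₀ + δ), g s := by
    have := integral_mono_on (by linarith : t₀ ≤ t₀ + δ)
      (_root_.intervalIntegrable_const (c := ε/2)) (hint t₀ (t₀+δ) ht₀0 (by linarith)) hlow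
    rw [intervalIntegral.integral_const] at this
    simp only [smul_eq_mul] at this
    calc δ * ε / 2 = (t₀ + δ - t₀) * (ε/2) := by ring
    _ ≤ _ := this
  have hNmid : (0:ℝ) ≤ ∫ s in N..t₀, g s := by
    apply intervalIntegral.integral_nonneg ht₀N
    exact fun s hs => hnn s (le_trans hN0 hs.1)
  have hGsplit : G (t₀ + δ) = G N + (∫ s in N..t₀, g s) + ∫ s in t₀..(t₀+δ), g s := by
    rw [hGadd N (t₀+δ) hN0 (by linarith), ← integral_add_adjacent_intervals
      (hint N t₀ hN0 ht₀N) (hint t₀ (t₀+δ) ht₀0 (by linarith))]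
    ring
  have hup : G (t₀ + δ) ≤ I := le_csSup hbdd ⟨t₀ + δ, Set.mem_Ici.mpr (by positivity), rfl⟩
  linarith

set_option maxHeartbeats 2000000 in
/-- Global asymptotic stability of the classical PLL with perfect-integrator
filter `H(s) = (β + αs)/s` for every frequency deviation `ω` (infinite pull-in
range): every solution of `ẋ = β sin θ`, `θ̇ = ω − L x − L α sin θ` on `[0, ∞)`
converges to an equilibrium `(ω/L, kπ)`. -/
theorem pll_perfect_integrator_global_stability (α β L ω : ℝ)
    (hα : 0 < α) (hβ : 0 < β) (hL : 0 < L) (x θ : ℝ → ℝ)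
    (hx : ∀ t ∈ Set.Ici (0 : ℝ),
      HasDerivWithinAt x (β * Real.sin (θ t)) (Set.Ici (0 : ℝ)) t)
    (hθ : ∀ t ∈ Set.Ici (0 : ℝ),
      HasDerivWithinAt θ (ω - L * x t - L * α * Real.sin (θ t))
        (Set.Ici (0 : ℝ)) t) :
    ∃ k : ℤ, Tendsto x atTop (nhds (ω / L)) ∧
      Tendsto θ atTop (nhds ((k : ℝ) * Real.pi)) := by
  have hL' : L ≠ 0 := ne_of_gt hL
  set c : ℝ := ω / L with hc
  have hLc : L * c = ω := by rw [hc]; field_simp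
  set f : ℝ → ℝ := fun t => ω - L * x t - L * α * Real.sin (θ t) with hfdef
  set V : ℝ → ℝ := fun t => (x t - c)^2/2 + (β/L) * (1 - Real.cos (θ t)) with hVdef
  set g : ℝ → ℝ := fun t => Real.sin (θ t)^2 with hgdef
  -- continuity
  have hθc : ContinuousOn θ (Set.Ici 0) := fun t ht => (hθ t ht).continuousWithinAt
  have hxc : ContinuousOn x (Set.Ici 0) := fun t ht => (hx t ht).continuousWithinAt
  have hgc : ContinuousOn g (Set.Ici 0) :=
    (Real.continuous_sin.comp_continuousOn hθc).pow 2
  have hfc : ContinuousOn f (Set.Ici 0) := by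
    apply ContinuousOn.sub
    · exact continuousOn_const.sub (continuousOn_const.mul hxc)
    · exact continuousOn_const.mul (Real.continuous_sin.comp_continuousOn hθc)
  -- derivative of V
  have hV : ∀ t ∈ Set.Ici (0:ℝ), HasDerivWithinAt V (-(α*β) * g t) (Set.Ici 0) t := by
    intro t ht
    have h1 : HasDerivWithinAt (fun s => (x s - c)^2/2)
        (((2:ℕ) * (x t - c) ^ 1 * (β * Real.sin (θ t)))/2) (Set.Ici 0) t :=
      (((hx t ht).sub_const c).pow 2).div_const 2
    have h2 : HasDerivWithinAt (fun s => Real.cos (θ s))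
        (-Real.sin (θ t) * f t) (Set.Ici 0) t :=
      (Real.hasDerivAt_cos (θ t)).comp_hasDerivWithinAt t (hθ t ht)
    have h3 := h1.add ((h2.const_sub 1).const_mul (β/L))
    refine h3.congr_deriv ?_
    simp only [hgdef, hfdef, hc]
    field_simp
    ring
  have hVnn : ∀ t, 0 ≤ V t := by
    intro t
    have h1 := Real.cos_le_one (θ t)
    have hb : 0 ≤ β/L := div_nonneg hβ.le hL.le
    have h2 : 0 ≤ (x t - c)^2 := sq_nonneg _
    simp only [hVdef]
    nlinarith
  -- FTC identity
  have hFTC : ∀ t, 0 ≤ t → ∫ s in (0:ℝ)..t, g s = (V 0 - V t) / (α*β) := by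
    intro t ht
    have h1 : ∫ s in (0:ℝ)..t, (-(α*β)) * g s = V t - V 0 :=
      ftc_ici hV (continuousOn_const.mul hgc) le_rfl ht
    rw [intervalIntegral.integral_const_mul] at h1
    have hαβ : (0:ℝ) < α*β := by positivity
    field_simp
    linarith
  have hVle : ∀ t, 0 ≤ t → V t ≤ V 0 := by
    intro t ht
    have h1 : 0 ≤ ∫ s in (0:ℝ)..t, g s :=
      intervalIntegral.integral_nonneg ht (fun s _ => sq_nonneg _)
    rw [hFTC t ht] at h1
    have hαβ : (0:ℝ) < α*β := by positivity
    by_contra hcon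
    push_neg at hcon
    have h2 : (V 0 - V t)/(α*β) < 0 := div_neg_of_neg_of_pos (by linarith) hαβ
    linarith
  -- bound on x
  set B := Real.sqrt (2 * V 0) with hB
  have hBnn : 0 ≤ B := Real.sqrt_nonneg _
  have hxB : ∀ t, 0 ≤ t → |x t - c| ≤ B := by
    intro t ht
    have h1 : (x t - c)^2 ≤ 2 * V 0 := by
      have h2 := hVle t ht
      have hcos := Real.cos_le_one (θ t)
      have hb : 0 ≤ β/L := div_nonneg hβ.le hL.le
      simp only [hVdef] at h2 ⊢
      nlinarith [mul_nonneg hb (by linarith : (0:ℝ) ≤ 1 - Real.cos (θ t))]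
    calc |x t - c| = Real.sqrt ((x t - c)^2) := (Real.sqrt_sq_eq_abs _).symm
    _ ≤ B := Real.sqrt_le_sqrt h1
  -- bound on θ'
  have hθ'B : ∀ t, 0 ≤ t → |f t| ≤ L * B + L * α := by
    intro t ht
    have h1 : f t = L * (c - x t) - L * α * Real.sin (θ t) := by
      simp only [hfdef]; rw [← hLc]; ring
    obtain ⟨hxl, hxr⟩ := abs_le.mp (hxB t ht)
    rw [h1, abs_le]
    constructor <;>
      linarith [mul_le_mul_of_nonneg_left hxr hL.le,
        mul_le_mul_of_nonneg_left hxl hL.le,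
        mul_le_mul_of_nonneg_left (Real.sin_le_one (θ t)) (mul_nonneg hL.le hα.le),
        mul_le_mul_of_nonneg_left (Real.neg_one_le_sin (θ t)) (mul_nonneg hL.le hα.le)]
  -- Lipschitz bound on g
  set M := 2 * (L * B + L * α) + 1 with hMdef
  have hMpos : 0 < M := by positivity
  have hg' : ∀ t ∈ Set.Ici (0:ℝ),
      HasDerivWithinAt g ((2:ℕ) * Real.sin (θ t) ^ 1 * (Real.cos (θ t) * f t)) (Set.Ici 0) t := by
    intro t ht
    exact ((Real.hasDerivAt_sin (θ t)).comp_hasDerivWithinAt t (hθ t ht)).pow 2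
  have hglip : ∀ s ∈ Set.Ici (0:ℝ), ∀ t ∈ Set.Ici (0:ℝ), |g s - g t| ≤ M * |s - t| := by
    intro s hs t ht
    have hbound : ∀ u ∈ Set.Ici (0:ℝ),
        ‖(2:ℕ) * Real.sin (θ u) ^ 1 * (Real.cos (θ u) * f u)‖ ≤ M := by
      intro u hu
      have h1 := hθ'B u hu
      have h2 := Real.abs_sin_le_one (θ u)
      have h3 := Real.abs_cos_le_one (θ u)
      have habs : |(2:ℝ) * Real.sin (θ u) ^ 1 * (Real.cos (θ u) * f u)|
          ≤ 2 * (1 * (1 * |f u|)) := by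
        rw [abs_mul, abs_mul, abs_mul, pow_one, abs_two]
        have p0 : 0 ≤ |Real.cos (θ u)| * |f u| := mul_nonneg (abs_nonneg _) (abs_nonneg _)
        have p1 : |Real.cos (θ u)| * |f u| ≤ |f u| := mul_le_of_le_one_left (abs_nonneg _) h3
        have p2 : |Real.sin (θ u)| * (|Real.cos (θ u)| * |f u|) ≤ |Real.cos (θ u)| * |f u| :=
          mul_le_of_le_one_left p0 h2
        nlinarith
      simp only [Real.norm_eq_abs]
      push_cast
      calc |(2:ℝ) * Real.sin (θ u) ^ 1 * (Real.cos (θ u) * f u)| ≤ 2 * (1*(1*|f u|)) := habs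
      _ ≤ M := by rw [hMdef]; nlinarith
    have := Convex.norm_image_sub_le_of_norm_hasDerivWithin_le hg' hbound (convex_Ici 0) ht hs
    simpa [Real.norm_eq_abs] using this
  -- Barbalat: g → 0
  have hgK : ∀ t ∈ Set.Ici (0:ℝ), (∫ s in (0:ℝ)..t, g s) ≤ V 0 / (α*β) := by
    intro t ht
    rw [hFTC t ht]
    have hαβ : (0:ℝ) < α*β := by positivity
    have h1 := hVnn t
    gcongr
    linarith
  have hg0 : Tendsto g atTop (nhds 0) :=
    barbalat hMpos hgc (fun t _ => sq_nonneg _) hglip hgK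
  -- sin θ → 0
  have hsin0 : Tendsto (fun t => Real.sin (θ t)) atTop (nhds 0) := by
    rw [tendsto_zero_iff_abs_tendsto_zero]
    have h1 : Tendsto (fun t => Real.sqrt (g t)) atTop (nhds 0) := by
      have := hg0.sqrt
      simpa using this
    refine h1.congr (fun t => ?_)
    simp only [hgdef]
    exact Real.sqrt_sq_eq_abs _
  -- trap θ near a multiple of π
  have hπpos := Real.pi_pos
  have hπ3 := Real.pi_gt_three
  have hsin1pos : 0 < Real.sin 1 := Real.sin_pos_of_pos_of_lt_pi one_pos (by linarith)
  obtain ⟨T', hT'⟩ := Metric.tendsto_atTop.mp hsin0 (Real.sin 1) hsin1pos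
  set T := max T' 0 with hTdef
  have hT0 : (0:ℝ) ≤ T := le_max_right _ _
  have hTs : ∀ t, T ≤ t → |Real.sin (θ t)| < Real.sin 1 := by
    intro t ht
    have := hT' t (le_trans (le_max_left _ _) ht)
    rwa [Real.dist_eq, sub_zero] at this
  -- shift identity
  have hshift : ∀ y : ℝ, ∀ m : ℤ, |Real.sin (y - m*Real.pi)| = |Real.sin y| := by
    intro y m
    have h1 : Real.sin ((y - m*Real.pi) + m*Real.pi) = (-1)^m * Real.sin (y - m*Real.pi) :=
      Real.sin_add_int_mul_pi _ m
    have h2 : y - m*Real.pi + m*Real.pi = y := by ring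
    rw [h2] at h1
    have h4 : |(-1:ℝ)^m| = 1 := by
      rcases Int.even_or_odd m with he | ho
      · rw [he.neg_one_zpow, abs_one]
      · rw [ho.neg_one_zpow, abs_neg, abs_one]
    rw [h1, abs_mul, h4, one_mul]
  have habs_sin : ∀ z : ℝ, |z| ≤ Real.pi → |Real.sin z| = Real.sin |z| := by
    intro z hz
    rcases le_or_gt 0 z with h | h
    · rw [abs_of_nonneg h] at hz ⊢
      rw [abs_of_nonneg (Real.sin_nonneg_of_nonneg_of_le_pi h hz)]
    · rw [abs_of_neg h] at hz ⊢
      have h2 : 0 ≤ Real.sin (-z) := Real.sin_nonneg_of_nonneg_of_le_pi (by linarith) hz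
      have h3 : Real.sin z ≤ 0 := by
        rw [Real.sin_neg] at h2; linarith
      rw [abs_of_nonpos h3, Real.sin_neg]
  set k : ℤ := round (θ T / Real.pi) with hkdef
  have hround : |θ T - k*Real.pi| ≤ Real.pi/2 := by
    have h3 : θ T - k*Real.pi = (θ T / Real.pi - k) * Real.pi := by field_simp
    rw [h3, abs_mul, abs_of_pos hπpos]
    nlinarith [abs_sub_round (θ T / Real.pi)]

  have hkT : |θ T - k*Real.pi| < 1 := by
    by_contra hcon
    push_neg at hcon
    have h1 : |Real.sin (θ T - k*Real.pi)| = |Real.sin (θ T)| := hshift _ k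
    have h2 : |Real.sin (θ T)| < Real.sin 1 := hTs T le_rfl
    have h3 : |Real.sin (θ T - k*Real.pi)| = Real.sin |θ T - k*Real.pi| :=
      habs_sin _ (le_trans hround (by linarith))
    have h4 : Real.sin 1 ≤ Real.sin |θ T - k*Real.pi| := by
      rcases eq_or_lt_of_le hcon with h | h
      · rw [← h]
      · exact le_of_lt (Real.strictMonoOn_sin ⟨by linarith, by linarith⟩
          ⟨by linarith [abs_nonneg (θ T - k*Real.pi)], hround⟩ h)
    linarith
  have hsin_shift1 : |Real.sin ((k:ℝ)*Real.pi + 1)| = Real.sin 1 := by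
    have := hshift ((k:ℝ)*Real.pi + 1) k
    have h2 : (k:ℝ)*Real.pi + 1 - k*Real.pi = 1 := by ring
    rw [h2] at this
    rw [← this, abs_of_pos hsin1pos]
  have hsin_shift2 : |Real.sin ((k:ℝ)*Real.pi - 1)| = Real.sin 1 := by
    have := hshift ((k:ℝ)*Real.pi - 1) k
    have h2 : (k:ℝ)*Real.pi - 1 - k*Real.pi = -1 := by ring
    rw [h2] at this
    rw [← this, Real.sin_neg, abs_neg, abs_of_pos hsin1pos]
  have hball : ∀ t, T ≤ t → |θ t - k*Real.pi| < 1 := by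
    intro t ht
    by_contra hcon
    push_neg at hcon
    have hθct : ContinuousOn θ (Set.Icc T t) := hθc.mono (fun s hs => le_trans hT0 hs.1)
    rcases le_abs.mp hcon with h | h
    · -- θ t ≥ kπ + 1
      have hle : θ T ≤ (k:ℝ)*Real.pi + 1 := by
        have := (abs_lt.mp hkT).2; linarith
      obtain ⟨s, hs, hθs⟩ := intermediate_value_Icc ht hθct
        (Set.mem_Icc.mpr ⟨hle, by linarith⟩)
      have h5 := hTs s hs.1
      rw [hθs, hsin_shift1] at h5
      linarith
    · -- θ t ≤ kπ - 1
      have hge : (k:ℝ)*Real.pi - 1 ≤ θ T := by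
        have := (abs_lt.mp hkT).1; linarith
      obtain ⟨s, hs, hθs⟩ := intermediate_value_Icc' ht hθct
        (Set.mem_Icc.mpr ⟨by linarith, hge⟩)
      have h5 := hTs s hs.1
      rw [hθs, hsin_shift2] at h5
      linarith
  have hθlim : Tendsto θ atTop (nhds ((k:ℝ)*Real.pi)) := by
    rw [tendsto_iff_dist_tendsto_zero]
    have hg0' : Tendsto (fun t => Real.pi/2 * |Real.sin (θ t)|) atTop (nhds 0) := by
      have h1 := (tendsto_zero_iff_abs_tendsto_zero _).mp hsin0
      have := h1.const_mul (Real.pi/2)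
      simpa using this
    apply squeeze_zero' (Filter.Eventually.of_forall (fun t => dist_nonneg)) _ hg0'
    filter_upwards [eventually_ge_atTop T] with t ht
    have h1 := hball t ht
    have h2 : |Real.sin (θ t - k*Real.pi)| = |Real.sin (θ t)| := hshift _ k
    have h3 : |Real.sin (θ t - k*Real.pi)| = Real.sin |θ t - k*Real.pi| :=
      habs_sin _ (by linarith)
    have h4 : 2/Real.pi * |θ t - k*Real.pi| ≤ Real.sin |θ t - k*Real.pi| :=
      Real.mul_le_sin (abs_nonneg _) (by linarith)
    have h5 : 2/Real.pi * |θ t - k*Real.pi| ≤ |Real.sin (θ t)| := by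
      rw [← h2, h3]; exact h4
    have h6 := mul_le_mul_of_nonneg_left h5 (by positivity : (0:ℝ) ≤ Real.pi/2)
    have h7 : Real.pi/2 * (2/Real.pi * |θ t - k*Real.pi|) = |θ t - k*Real.pi| := by
      field_simp
    rw [Real.dist_eq]
    linarith
  -- V converges
  have hVanti : Antitone (fun t => V (max t 0)) := by
    intro s t hst
    have hs0 : (0:ℝ) ≤ max s 0 := le_max_right _ _
    have hst' : max s 0 ≤ max t 0 := max_le_max hst le_rfl
    have h1 : ∫ u in (max s 0)..(max t 0), (-(α*β)) * g u = V (max t 0) - V (max s 0) :=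
      ftc_ici hV (continuousOn_const.mul hgc) hs0 hst'
    rw [intervalIntegral.integral_const_mul] at h1
    have h2 : 0 ≤ ∫ u in (max s 0)..(max t 0), g u :=
      intervalIntegral.integral_nonneg hst' (fun u _ => sq_nonneg _)
    have hαβ : (0:ℝ) < α*β := by positivity
    simp only
    nlinarith
  have hVbdd : BddBelow (Set.range (fun t => V (max t 0))) :=
    ⟨0, fun y ⟨t, ht⟩ => ht ▸ hVnn _⟩
  set v : ℝ := ⨅ t, V (max t 0) with hvdef
  have hVtend0 : Tendsto (fun t => V (max t 0)) atTop (nhds v) :=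
    tendsto_atTop_ciInf hVanti hVbdd
  have hVtend : Tendsto V atTop (nhds v) := by
    apply hVtend0.congr'
    filter_upwards [eventually_ge_atTop (0:ℝ)] with t ht
    rw [max_eq_left ht]
  have hcoslim : Tendsto (fun t => Real.cos (θ t)) atTop (nhds (Real.cos ((k:ℝ)*Real.pi))) :=
    (Real.continuous_cos.tendsto _).comp hθlim
  set r : ℝ := 2*(v - (β/L)*(1 - Real.cos ((k:ℝ)*Real.pi))) with hrdef
  have hqlim : Tendsto (fun t => (x t - c)^2) atTop (nhds r) := by
    have h1 : Tendsto (fun t => 2*(V t - (β/L)*(1 - Real.cos (θ t)))) atTop (nhds r) := by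
      apply Tendsto.const_mul
      exact hVtend.sub (Tendsto.const_mul _ (tendsto_const_nhds.sub hcoslim))
    refine h1.congr (fun t => ?_)
    simp only [hVdef]
    ring
  have hrnn : 0 ≤ r := ge_of_tendsto hqlim (Filter.Eventually.of_forall (fun t => sq_nonneg _))
  have hr0 : r = 0 := by
    by_contra hrne
    have hrpos : 0 < r := lt_of_le_of_ne hrnn (Ne.symm hrne)
    set ρ : ℝ := Real.sqrt (r/2) with hρdef
    have hρpos : 0 < ρ := Real.sqrt_pos.mpr (by linarith)
    obtain ⟨T₁', hT₁'⟩ := eventually_atTop.mp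
      (hqlim.eventually (eventually_gt_nhds (by linarith : r/2 < r)))
    have hραpos : (0:ℝ) < ρ/(2*α) := by positivity
    obtain ⟨T₂', hT₂'⟩ := Metric.tendsto_atTop.mp hsin0 (ρ/(2*α)) hραpos
    set T₁ : ℝ := max (max T₁' T₂') T with hT₁def
    have hT₁T : T ≤ T₁ := le_max_right _ _
    have hT₁0 : (0:ℝ) ≤ T₁ := le_trans hT0 hT₁T
    have hsmall : ∀ t, T₁ ≤ t → |Real.sin (θ t)| < ρ/(2*α) := by
      intro t ht
      have := hT₂' t (le_trans (le_trans (le_max_right _ _) (le_max_left _ _)) ht)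
      rwa [Real.dist_eq, sub_zero] at this
    have habs2 : ∀ t, T₁ ≤ t → ρ < |x t - c| := by
      intro t ht
      have h1 : r/2 < (x t - c)^2 :=
        hT₁' t (le_trans (le_trans (le_max_left _ _) (le_max_left _ _)) ht)
      have h2 : ρ^2 < |x t - c|^2 := by
        rw [hρdef, Real.sq_sqrt (by linarith : (0:ℝ) ≤ r/2), sq_abs]
        exact h1
      exact lt_of_pow_lt_pow_left₀ 2 (abs_nonneg _) h2
    have hxcont : ∀ t, T₁ ≤ t → ContinuousOn x (Set.Icc T₁ t) :=
      fun t ht => hxc.mono (fun s hs => le_trans hT₁0 hs.1)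
    set d : ℝ := L*ρ/2 with hddef
    have hd : 0 < d := by positivity
    have hT₁ρ := habs2 T₁ le_rfl
    have hsign : (∀ t, T₁ ≤ t → c + ρ < x t) ∨ (∀ t, T₁ ≤ t → x t < c - ρ) := by
      rcases lt_trichotomy (x T₁) c with hlt | heq | hgt
      · right
        intro t ht
        by_contra hcon
        push_neg at hcon
        have h1 := habs2 t ht
        have h2 : c + ρ < x t := by
          rcases lt_abs.mp h1 with h | h
          · linarith
          · linarith
        obtain ⟨s, hs, hxs⟩ := intermediate_value_Icc ht (hxcont t ht)
          (show c ∈ Set.Icc (x T₁) (x t) from Set.mem_Icc.mpr ⟨by linarith, by linarith⟩)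
        have h3 := habs2 s hs.1
        rw [hxs] at h3
        simp at h3
        linarith
      · exfalso
        rw [heq] at hT₁ρ
        simp at hT₁ρ
        linarith
      · left
        intro t ht
        by_contra hcon
        push_neg at hcon
        have h1 := habs2 t ht
        have h2 : x t < c - ρ := by
          rcases lt_abs.mp h1 with h | h
          · linarith
          · linarith
        obtain ⟨s, hs, hxs⟩ := intermediate_value_Icc' ht (hxcont t ht)
          (show c ∈ Set.Icc (x t) (x T₁) from Set.mem_Icc.mpr ⟨by linarith, by linarith⟩)
        have h3 := habs2 s hs.1
        rw [hxs] at h3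
        simp at h3
        linarith
    rcases hsign with hpos | hneg
    · -- θ' ≤ -d eventually, so θ → -∞, contradiction
      have hub : ∀ s, T₁ ≤ s → f s ≤ -d := by
        intro s hs
        have h1 : c + ρ < x s := hpos s hs
        have h2 := (abs_lt.mp (hsmall s hs)).1
        have h3 := (abs_lt.mp (hsmall s hs)).2
        have m1 : L * (c - x s) < L * (-ρ) := mul_lt_mul_of_pos_left (by linarith) hL
        have m2 : L*α*(-Real.sin (θ s)) < L*α*(ρ/(2*α)) :=
          mul_lt_mul_of_pos_left (by linarith) (by positivity)
        have e : L*α*(ρ/(2*α)) = L*ρ/2 := by field_simp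
        simp only [hfdef]
        rw [← hLc, hddef]
        nlinarith
      have hesc := escape hT₁0 hθ hfc hub
      set ts : ℝ := max T₁ (T₁ + (θ T₁ - (k:ℝ)*Real.pi + 2)/d) with htsdef
      have hts1 : T₁ ≤ ts := le_max_left _ _
      have h1 : θ ts ≤ θ T₁ - d*(ts - T₁) := hesc ts hts1
      have h2 : (θ T₁ - (k:ℝ)*Real.pi + 2)/d ≤ ts - T₁ := by
        have := le_max_right T₁ (T₁ + (θ T₁ - (k:ℝ)*Real.pi + 2)/d)
        linarith
      have h3 : d * ((θ T₁ - (k:ℝ)*Real.pi + 2)/d) = θ T₁ - (k:ℝ)*Real.pi + 2 := by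
        field_simp
      have h4 : θ ts ≤ (k:ℝ)*Real.pi - 2 := by
        nlinarith [mul_le_mul_of_nonneg_left h2 hd.le]
      have h5 := (abs_lt.mp (hball ts (le_trans hT₁T hts1))).1
      linarith
    · -- θ' ≥ d eventually, so θ → +∞, contradiction
      have hθneg : ∀ s ∈ Set.Ici (0:ℝ),
          HasDerivWithinAt (fun t => -θ t) (-f s) (Set.Ici 0) s :=
        fun s hs => (hθ s hs).neg
      have hub : ∀ s, T₁ ≤ s → -f s ≤ -d := by
        intro s hs
        have h1 : x s < c - ρ := hneg s hs
        have h2 := (abs_lt.mp (hsmall s hs)).1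
        have h3 := (abs_lt.mp (hsmall s hs)).2
        have m1 : L * ρ < L * (c - x s) := mul_lt_mul_of_pos_left (by linarith) hL
        have m2 : L*α*Real.sin (θ s) < L*α*(ρ/(2*α)) :=
          mul_lt_mul_of_pos_left (by linarith) (by positivity)
        have e : L*α*(ρ/(2*α)) = L*ρ/2 := by field_simp
        simp only [hfdef]
        rw [← hLc, hddef]
        nlinarith
      have hesc := escape hT₁0 hθneg hfc.neg hub
      set ts : ℝ := max T₁ (T₁ + ((k:ℝ)*Real.pi + 2 - θ T₁)/d) with htsdef
      have hts1 : T₁ ≤ ts := le_max_left _ _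
      have h1 : -θ ts ≤ -θ T₁ - d*(ts - T₁) := hesc ts hts1
      have h2 : ((k:ℝ)*Real.pi + 2 - θ T₁)/d ≤ ts - T₁ := by
        have := le_max_right T₁ (T₁ + ((k:ℝ)*Real.pi + 2 - θ T₁)/d)
        linarith
      have h3 : d * (((k:ℝ)*Real.pi + 2 - θ T₁)/d) = (k:ℝ)*Real.pi + 2 - θ T₁ := by
        field_simp
      have h4 : (k:ℝ)*Real.pi + 2 ≤ θ ts := by
        nlinarith [mul_le_mul_of_nonneg_left h2 hd.le]
      have h5 := (abs_lt.mp (hball ts (le_trans hT₁T hts1))).2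
      linarith
  have hxlim : Tendsto x atTop (nhds c) := by
    rw [tendsto_iff_dist_tendsto_zero]
    have h1 : Tendsto (fun t => Real.sqrt ((x t - c)^2)) atTop (nhds 0) := by
      have h2 := (hr0 ▸ hqlim).sqrt
      simpa using h2
    refine h1.congr (fun t => ?_)
    rw [Real.sqrt_sq_eq_abs, Real.dist_eq]
  exact ⟨k, hxlim, hθlim⟩
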